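/- For every p ∈ (0,1), the first-stage probability satisfies p_{1,n} ~ 1/(√(2π·p·(1-p))·√n) as n → ∞, i.e. lim_{n→∞} p_{1,n}·√(2π·p·(1-p)·n) = 1. -/

import Mathlib

open Real Filter Topology

/-- Generalized binomial coefficient `binom(n, α) = n! / (Γ(α+1)·Γ(n-α+1))`. -/
noncomputable def gbinom (n : ℕ) (a : ℝ) : ℝ :=
  (n.factorial : ℝ) / (Real.Gamma (a + 1) * Real.Gamma ((n : ℝ) - a + 1))

/-- The function `P_n(p) = binom(n, np) · p^(np) · (1-p)^(n(1-p))`. -/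
noncomputable def Pn (n : ℕ) (p : ℝ) : ℝ :=
  gbinom n ((n : ℝ) * p) * p ^ ((n : ℝ) * p) * (1 - p) ^ ((n : ℝ) * (1 - p))

/- ## Auxiliary lemmas: Stirling's formula for the real Gamma function -/

lemma key_ineq {a b : ℝ} (ha : 0 < a) (hab : a ≤ b) :
    (b - a) * (Real.log a + 1) ≤ b * Real.log b - a * Real.log a := by
  have hb : 0 < b := lt_of_lt_of_le ha hab
  have h1 : Real.log (a / b) ≤ a / b - 1 := Real.log_le_sub_one_of_pos (by positivity)
  have h2 : Real.log (a / b) = Real.log a - Real.log b := Real.log_div ha.ne' hb.ne'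
  rw [h2] at h1
  have : b * (Real.log a - Real.log b) ≤ b * (a/b - 1) := by
    exact mul_le_mul_of_nonneg_left h1 hb.le
  have h3 : b * (a/b - 1) = a - b := by field_simp
  nlinarith [this]

lemma key_ineq2 {a b : ℝ} (ha : 0 < a) (hab : a ≤ b) :
    b * Real.log b - a * Real.log a ≤ (b - a) * (Real.log b + 1) := by
  have hb : 0 < b := lt_of_lt_of_le ha hab
  have h1 : Real.log (b / a) ≤ b / a - 1 := Real.log_le_sub_one_of_pos (by positivity)
  have h2 : Real.log (b / a) = Real.log b - Real.log a := Real.log_div hb.ne' ha.ne'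
  rw [h2] at h1
  have : a * (Real.log b - Real.log a) ≤ a * (b/a - 1) := mul_le_mul_of_nonneg_left h1 ha.le
  have h3 : a * (b/a - 1) = b - a := by field_simp
  nlinarith [this]

lemma Gamma_interp_le {m : ℕ} {x : ℝ} (h1 : (m:ℝ) ≤ x) (h2 : x < (m:ℝ)+1) :
    Real.log (Real.Gamma (x+1)) ≤
      (1-(x-m)) * Real.log (m.factorial) + (x-m) * Real.log ((m+1).factorial) := by
  set θ : ℝ := x - m with hθ
  have hθ0 : 0 ≤ θ := by simp [hθ]; linarith
  have hθ1 : θ < 1 := by simp [hθ]; linarith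
  rcases eq_or_lt_of_le hθ0 with h0 | h0
  · have hx : x = m := by simp [hθ] at h0; linarith
    rw [← h0, hx]
    have : Real.Gamma ((m:ℝ)+1) = m.factorial := Real.Gamma_nat_eq_factorial m
    rw [this]; simp
  · have key := Real.Gamma_mul_add_mul_le_rpow_Gamma_mul_rpow_Gamma
      (s := (m:ℝ)+1) (t := (m:ℝ)+2) (a := 1-θ) (b := θ)
      (by positivity) (by positivity) (by linarith) h0 (by ring)
    have harg : (1-θ) * ((m:ℝ)+1) + θ * ((m:ℝ)+2) = x + 1 := by simp [hθ]; ring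
    rw [harg, Real.Gamma_nat_eq_factorial] at key
    have h2' : Real.Gamma ((m:ℝ)+2) = (m+1).factorial := by
      have := Real.Gamma_nat_eq_factorial (m+1)
      push_cast at this ⊢; rw [← this]; ring_nf
    rw [h2'] at key
    have hG : 0 < Real.Gamma (x+1) :=
      Real.Gamma_pos_of_pos (by have := (Nat.cast_nonneg m : (0:ℝ) ≤ m); linarith)
    have hf : (0:ℝ) < m.factorial := by positivity
    have hf2 : (0:ℝ) < (m+1).factorial := by positivity
    calc Real.log (Real.Gamma (x+1)) ≤
        Real.log ((m.factorial:ℝ) ^ (1-θ) * ((m+1).factorial:ℝ) ^ θ) :=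
          Real.log_le_log hG key
      _ = (1-θ) * Real.log (m.factorial) + θ * Real.log ((m+1).factorial) := by
          rw [Real.log_mul (ne_of_gt (Real.rpow_pos_of_pos hf _))
              (ne_of_gt (Real.rpow_pos_of_pos hf2 _)),
            Real.log_rpow hf, Real.log_rpow hf2]

lemma Gamma_interp_ge {m : ℕ} {x : ℝ} (h1 : (m:ℝ) ≤ x) (h2 : x < (m:ℝ)+1) :
    Real.log ((m+1).factorial) ≤
      Real.log (Real.Gamma (x+1)) + ((m:ℝ)+1-x) * Real.log (x+1) := by
  have hm0 : (0:ℝ) ≤ m := Nat.cast_nonneg m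
  have hx0 : 0 ≤ x := le_trans hm0 h1
  set θ : ℝ := x - m with hθ
  have hθ0 : 0 ≤ θ := by simp [hθ]; linarith
  have hθ1 : θ < 1 := by simp [hθ]; linarith
  rcases eq_or_lt_of_le hθ0 with h0 | h0
  · have hx : x = m := by simp [hθ] at h0; linarith
    subst hx
    have e1 : Real.Gamma ((m:ℝ)+1) = m.factorial := Real.Gamma_nat_eq_factorial m
    rw [e1]
    have : ((m+1).factorial : ℝ) = ((m:ℝ)+1) * m.factorial := by
      push_cast [Nat.factorial_succ]; ring
    rw [this, Real.log_mul (by positivity) (by positivity),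
      show ((m:ℝ) + 1 - m) = 1 by ring, one_mul]
    linarith [Real.log_nonneg (by linarith : (1:ℝ) ≤ (m:ℝ)+1)]
  · have key := Real.Gamma_mul_add_mul_le_rpow_Gamma_mul_rpow_Gamma
      (s := x+1) (t := x+2) (a := θ) (b := (m:ℝ)+1-x)
      (by linarith) (by linarith) h0 (by linarith) (by rw [hθ]; ring)
    have harg : θ * (x+1) + ((m:ℝ)+1-x) * (x+2) = (m:ℝ)+2 := by simp [hθ]; ring
    rw [harg] at key
    have h2' : Real.Gamma ((m:ℝ)+2) = (m+1).factorial := by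
      have := Real.Gamma_nat_eq_factorial (m+1)
      push_cast at this ⊢; rw [← this]; ring_nf
    rw [h2'] at key
    have hG : 0 < Real.Gamma (x+1) := Real.Gamma_pos_of_pos (by linarith)
    have hG2 : Real.Gamma (x+2) = (x+1) * Real.Gamma (x+1) := by
      have := Real.Gamma_add_one (s := x+1) (by positivity)
      rw [← this]; ring_nf
    rw [hG2] at key
    have hrw : Real.Gamma (x+1) ^ θ * ((x+1) * Real.Gamma (x+1)) ^ ((m:ℝ)+1-x)
        = Real.Gamma (x+1) * (x+1) ^ ((m:ℝ)+1-x) := by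
      rw [Real.mul_rpow (by positivity) hG.le, mul_comm ((x+1) ^ ((m:ℝ)+1-x)),
        ← mul_assoc, ← Real.rpow_add hG,
        show θ + ((m:ℝ)+1-x) = 1 by rw [hθ]; ring, Real.rpow_one]
    rw [hrw] at key
    calc Real.log ((m+1).factorial) ≤ Real.log (Real.Gamma (x+1) * (x+1) ^ ((m:ℝ)+1-x)) :=
        Real.log_le_log (by positivity) key
      _ = Real.log (Real.Gamma (x+1)) + ((m:ℝ)+1-x) * Real.log (x+1) := by
        rw [Real.log_mul hG.ne' (by positivity), Real.log_rpow (by positivity)]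

/-- The "Stirling phase" `φ(y) = y log y − y + log(2πy)/2`. -/
noncomputable def phiSt (y : ℝ) : ℝ := y * Real.log y - y + Real.log (2*π*y) / 2

/-- `t n = log n! − φ(n)`. -/
noncomputable def tSt (n : ℕ) : ℝ := Real.log (n.factorial) - phiSt n

lemma tendsto_tSt : Tendsto tSt atTop (𝓝 0) := by
  have h1 : Tendsto (fun n => Stirling.stirlingSeq n / Real.sqrt π) atTop (𝓝 1) := by
    have h := Stirling.tendsto_stirlingSeq_sqrt_pi.div (tendsto_const_nhds (x := Real.sqrt π))
      (by positivity)
    have : Real.sqrt π / Real.sqrt π = 1 := div_self (by positivity)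
    rw [this] at h
    exact h
  have h2 : Tendsto (fun n => Real.log (Stirling.stirlingSeq n / Real.sqrt π)) atTop (𝓝 0) := by
    have := h1.log one_ne_zero
    simpa using this
  apply h2.congr'
  filter_upwards [eventually_ge_atTop 1] with n hn
  have hn0 : (0:ℝ) < n := by exact_mod_cast hn
  have hs : Stirling.stirlingSeq n = n.factorial / (Real.sqrt (2*n) * ((n:ℝ)/Real.exp 1)^n) := rfl
  rw [hs, Real.log_div (by positivity) (by positivity), Real.log_div (by positivity) (by positivity),
    Real.log_mul (by positivity) (by positivity), Real.log_pow, Real.log_sqrt (by positivity),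
    Real.log_sqrt (by positivity), Real.log_div (by positivity) (Real.exp_ne_zero 1),
    Real.log_exp, Real.log_mul two_ne_zero hn0.ne']
  simp only [tSt, phiSt]
  rw [Real.log_mul (mul_ne_zero two_ne_zero Real.pi_ne_zero) hn0.ne',
    Real.log_mul two_ne_zero Real.pi_ne_zero]
  ring

lemma log_succ_sub {y : ℝ} (hy : 0 < y) : Real.log (y+1) - Real.log y ≤ 1/y := by
  have h := Real.log_le_sub_one_of_pos (show 0 < (y+1)/y by positivity)
  rw [Real.log_div (by positivity) hy.ne'] at h
  have : (y+1)/y - 1 = 1/y := by field_simp; ring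
  linarith

lemma arith_upper (θ M lm lm1 lx t1 t2 a1 a2 lG l2pi u : ℝ)
    (hθ0 : 0 ≤ θ) (hθ1 : θ ≤ 1)
    (H : lG ≤ (1-θ)*(t1 + (M*lm - M + (l2pi+lm)/2))
        + θ*(t2 + ((M+1)*lm1 - (M+1) + (l2pi+lm1)/2)))
    (f1 : θ*((M+1)*lm1 - M*lm) ≤ θ*(lm1+1))
    (f2 : θ*(lm+1) ≤ (M+θ)*lx - M*lm)
    (f3 : θ*(lm1-lm) ≤ 1*(lm1-lm))
    (f5 : (1-θ)*t1 ≤ (1-θ)*a1) (f6 : 0 ≤ θ*a1)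
    (f7 : θ*t2 ≤ θ*a2) (f8 : 0 ≤ (1-θ)*a2)
    (k3a : lm ≤ lx) (k4 : lm1 - lm ≤ u) :
    lG - ((M+θ)*lx - (M+θ) + (l2pi+lx)/2) ≤ a1 + a2 + (3/2)*u := by
  nlinarith [f1, f2, f3, f5, f6, f7, f8, k3a, k4, H]

lemma arith_lower (θ M lx lx1 lm1 t2 a2 lG l2pi v : ℝ)
    (hθ0 : 0 ≤ θ) (hθ1 : θ ≤ 1)
    (H : t2 + ((M+1)*lm1 - (M+1) + (l2pi+lm1)/2) ≤ lG + (1-θ)*lx1)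
    (k5 : (1-θ)*(lx+1) ≤ (M+1)*lm1 - (M+θ)*lx)
    (k6 : lx ≤ lm1)
    (f3 : (1-θ)*(lx1-lx) ≤ 1*(lx1-lx))
    (f5 : -a2 ≤ t2)
    (k7 : lx1 - lx ≤ v) (hv : 0 ≤ v) :
    -a2 - v ≤ lG - ((M+θ)*lx - (M+θ) + (l2pi+lx)/2) := by
  nlinarith [H, k5, k6, f3, f5, k7, hv]

lemma G_upper {x : ℝ} (hx : 1 ≤ x) :
    Real.log (Real.Gamma (x+1)) - phiSt x ≤
      |tSt ⌊x⌋₊| + |tSt (⌊x⌋₊+1)| + 3/(2*(⌊x⌋₊:ℝ)) := by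
  set m := ⌊x⌋₊ with hm
  have hmx : (m:ℝ) ≤ x := Nat.floor_le (by linarith)
  have hxm : x < (m:ℝ)+1 := Nat.lt_floor_add_one x
  have hm1 : (1:ℝ) ≤ (m:ℝ) := by
    exact_mod_cast Nat.le_floor (by exact_mod_cast hx)
  have hM : (0:ℝ) < m := by linarith
  have hx0 : (0:ℝ) < x := by linarith
  have hθ0 : 0 ≤ x - (m:ℝ) := by linarith
  have hθ1 : x - (m:ℝ) ≤ 1 := by linarith
  have H := Gamma_interp_le hmx hxm
  have k1 := key_ineq hM hmx
  have k2 := key_ineq2 hM (by linarith : (m:ℝ) ≤ (m:ℝ)+1)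
  rw [show ((m:ℝ)+1-(m:ℝ)) = 1 by ring, one_mul] at k2
  have k3a := Real.log_le_log hM hmx
  have k3b := Real.log_le_log hx0 hxm.le
  have k4 := log_succ_sub hM
  have e1 : Real.log (2*π*(m:ℝ)) = Real.log (2*π) + Real.log m :=
    Real.log_mul (by positivity) hM.ne'
  have e2 : Real.log (2*π*((m:ℝ)+1)) = Real.log (2*π) + Real.log ((m:ℝ)+1) :=
    Real.log_mul (by positivity) (by positivity)
  have e3 : Real.log (2*π*x) = Real.log (2*π) + Real.log x :=
    Real.log_mul (by positivity) hx0.ne'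
  have tm : Real.log (m.factorial) = tSt m + phiSt m := by unfold tSt; ring
  have tm1 : Real.log ((m+1).factorial) = tSt (m+1) + phiSt ((m:ℝ)+1) := by
    unfold tSt; push_cast; ring
  rw [tm, tm1] at H
  have pm : phiSt (m:ℝ) = (m:ℝ) * Real.log m - m + (Real.log (2*π) + Real.log m)/2 := by
    unfold phiSt; rw [e1]
  have pm1 : phiSt ((m:ℝ)+1) = ((m:ℝ)+1) * Real.log ((m:ℝ)+1) - ((m:ℝ)+1)
      + (Real.log (2*π) + Real.log ((m:ℝ)+1))/2 := by
    unfold phiSt; rw [e2]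
  have px : phiSt x = x * Real.log x - x + (Real.log (2*π) + Real.log x)/2 := by
    unfold phiSt; rw [e3]
  rw [pm, pm1] at H
  have f1 : (x-(m:ℝ))*(((m:ℝ)+1)*Real.log ((m:ℝ)+1) - (m:ℝ)*Real.log m)
      ≤ (x-(m:ℝ))*(Real.log ((m:ℝ)+1)+1) := mul_le_mul_of_nonneg_left k2 hθ0
  have f2 : (x-(m:ℝ))*(Real.log (m:ℝ)+1) ≤ ((m:ℝ)+(x-(m:ℝ)))*Real.log x - (m:ℝ)*Real.log m := by
    rw [show ((m:ℝ)+(x-(m:ℝ))) = x by ring]; exact k1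
  have f3 : (x-(m:ℝ))*(Real.log ((m:ℝ)+1)-Real.log m)
      ≤ 1*(Real.log ((m:ℝ)+1)-Real.log m) :=
    mul_le_mul_of_nonneg_right hθ1 (by linarith)
  have f5 : (1-(x-(m:ℝ)))*tSt m ≤ (1-(x-(m:ℝ)))*|tSt m| :=
    mul_le_mul_of_nonneg_left (le_abs_self _) (by linarith)
  have f6 : 0 ≤ (x-(m:ℝ))*|tSt m| := mul_nonneg hθ0 (abs_nonneg _)
  have f7 : (x-(m:ℝ))*tSt (m+1) ≤ (x-(m:ℝ))*|tSt (m+1)| :=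
    mul_le_mul_of_nonneg_left (le_abs_self _) hθ0
  have f8 : 0 ≤ (1-(x-(m:ℝ)))*|tSt (m+1)| := mul_nonneg (by linarith) (abs_nonneg _)
  have main := arith_upper (x-(m:ℝ)) (m:ℝ) (Real.log m) (Real.log ((m:ℝ)+1)) (Real.log x)
    (tSt m) (tSt (m+1)) |tSt m| |tSt (m+1)| (Real.log (Real.Gamma (x+1))) (Real.log (2*π))
    (1/(m:ℝ)) hθ0 hθ1 H f1 f2 f3 f5 f6 f7 f8 k3a k4
  rw [px, show (3:ℝ)/(2*(m:ℝ)) = (3/2)*(1/(m:ℝ)) by ring]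
  linarith [main]

lemma G_lower {x : ℝ} (hx : 1 ≤ x) :
    -|tSt (⌊x⌋₊+1)| - 1/x ≤ Real.log (Real.Gamma (x+1)) - phiSt x := by
  set m := ⌊x⌋₊ with hm
  have hmx : (m:ℝ) ≤ x := Nat.floor_le (by linarith)
  have hxm : x < (m:ℝ)+1 := Nat.lt_floor_add_one x
  have hm1 : (1:ℝ) ≤ (m:ℝ) := by
    exact_mod_cast Nat.le_floor (by exact_mod_cast hx)
  have hM : (0:ℝ) < m := by linarith
  have hx0 : (0:ℝ) < x := by linarith
  have hθ0 : 0 ≤ x - (m:ℝ) := by linarith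
  have hθ1 : x - (m:ℝ) ≤ 1 := by linarith
  have H := Gamma_interp_ge hmx hxm
  have tm1 : Real.log ((m+1).factorial) = tSt (m+1) + phiSt ((m:ℝ)+1) := by
    unfold tSt; push_cast; ring
  have e2 : Real.log (2*π*((m:ℝ)+1)) = Real.log (2*π) + Real.log ((m:ℝ)+1) :=
    Real.log_mul (by positivity) (by positivity)
  have e3 : Real.log (2*π*x) = Real.log (2*π) + Real.log x :=
    Real.log_mul (by positivity) hx0.ne'
  have pm1 : phiSt ((m:ℝ)+1) = ((m:ℝ)+1) * Real.log ((m:ℝ)+1) - ((m:ℝ)+1)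
      + (Real.log (2*π) + Real.log ((m:ℝ)+1))/2 := by
    unfold phiSt; rw [e2]
  have px : phiSt x = x * Real.log x - x + (Real.log (2*π) + Real.log x)/2 := by
    unfold phiSt; rw [e3]
  rw [tm1, pm1, show ((m:ℝ)+1-x) = 1-(x-(m:ℝ)) by ring] at H
  have k5 : (1-(x-(m:ℝ)))*(Real.log x+1)
      ≤ ((m:ℝ)+1)*Real.log ((m:ℝ)+1) - ((m:ℝ)+(x-(m:ℝ)))*Real.log x := by
    have := key_ineq hx0 hxm.le
    rw [show ((m:ℝ)+1-x) = 1-(x-(m:ℝ)) by ring] at this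
    rw [show ((m:ℝ)+(x-(m:ℝ))) = x by ring]
    linarith
  have k6 := Real.log_le_log hx0 hxm.le
  have f3 : (1-(x-(m:ℝ)))*(Real.log (x+1)-Real.log x) ≤ 1*(Real.log (x+1)-Real.log x) := by
    apply mul_le_mul_of_nonneg_right (by linarith)
    have := Real.log_le_log hx0 (by linarith : x ≤ x+1)
    linarith
  have f5 : -|tSt (m+1)| ≤ tSt (m+1) := neg_abs_le _
  have k7 := log_succ_sub hx0
  have main := arith_lower (x-(m:ℝ)) (m:ℝ) (Real.log x) (Real.log (x+1)) (Real.log ((m:ℝ)+1))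
    (tSt (m+1)) |tSt (m+1)| (Real.log (Real.Gamma (x+1))) (Real.log (2*π)) (1/x)
    hθ0 hθ1 H k5 k6 f3 f5 k7 (by positivity)
  rw [px]
  linarith [main]

lemma tendsto_G : Tendsto (fun x : ℝ => Real.log (Real.Gamma (x+1)) - phiSt x) atTop (𝓝 0) := by
  have hfl : Tendsto (fun x : ℝ => ⌊x⌋₊) atTop atTop := tendsto_nat_floor_atTop
  have ht : Tendsto tSt atTop (𝓝 0) := tendsto_tSt
  have ht1 : Tendsto (fun k : ℕ => tSt (k+1)) atTop (𝓝 0) :=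
    ht.comp (tendsto_add_atTop_nat 1)
  have habs : Tendsto (fun x : ℝ => |tSt ⌊x⌋₊|) atTop (𝓝 0) := by
    have := (ht.comp hfl).abs; simpa using this
  have habs1 : Tendsto (fun x : ℝ => |tSt (⌊x⌋₊+1)|) atTop (𝓝 0) := by
    have := (ht1.comp hfl).abs; simpa using this
  have hinv : Tendsto (fun x : ℝ => 1/x) atTop (𝓝 0) := by
    simpa [one_div] using (tendsto_inv_atTop_zero (𝕜 := ℝ))
  have hfr : Tendsto (fun x : ℝ => 3/(2*(⌊x⌋₊:ℝ))) atTop (𝓝 0) := by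
    have h1 : Tendsto (fun k : ℕ => 3/(2*(k:ℝ))) atTop (𝓝 0) := by
      have := tendsto_const_div_atTop_nhds_zero_nat ((3:ℝ)/2)
      apply this.congr
      intro k; rw [div_div]
    exact h1.comp hfl
  have hlow : Tendsto (fun x : ℝ => -|tSt (⌊x⌋₊+1)| - 1/x) atTop (𝓝 0) := by
    have := (habs1.neg).sub hinv
    simpa using this
  have hup : Tendsto (fun x : ℝ => |tSt ⌊x⌋₊| + |tSt (⌊x⌋₊+1)| + 3/(2*(⌊x⌋₊:ℝ)))
      atTop (𝓝 0) := by
    have := (habs.add habs1).add hfr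
    simpa using this
  apply tendsto_of_tendsto_of_tendsto_of_le_of_le' hlow hup
  · filter_upwards [eventually_ge_atTop (1:ℝ)] with x hx using G_lower hx
  · filter_upwards [eventually_ge_atTop (1:ℝ)] with x hx using G_upper hx

/-- Stirling ratio for the Gamma function. -/
lemma tendsto_Gamma_ratio :
    Tendsto (fun x : ℝ => Real.Gamma (x+1) / Real.exp (phiSt x)) atTop (𝓝 1) := by
  have h := (Real.continuous_exp.tendsto 0).comp tendsto_G
  rw [Real.exp_zero] at h
  apply h.congr'
  filter_upwards [eventually_ge_atTop (1:ℝ)] with x hx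
  have hG : 0 < Real.Gamma (x+1) := Real.Gamma_pos_of_pos (by linarith)
  simp only [Function.comp_apply]
  rw [Real.exp_sub, Real.exp_log hG]

theorem first_stage_asymptotics (p : ℝ) (hp : p ∈ Set.Ioo (0:ℝ) 1) :
    Tendsto (fun n : ℕ => Pn n p * Real.sqrt (2 * π * p * (1 - p) * n)) atTop (𝓝 1) := by
  obtain ⟨hp0, hp1⟩ := hp
  have hq0 : 0 < 1 - p := by linarith
  -- the three Stirling ratios
  have hnp : Tendsto (fun n : ℕ => (n:ℝ) * p) atTop atTop :=
    (tendsto_natCast_atTop_atTop (R := ℝ)).atTop_mul_const hp0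
  have hnq : Tendsto (fun n : ℕ => (n:ℝ) * (1-p)) atTop atTop :=
    (tendsto_natCast_atTop_atTop (R := ℝ)).atTop_mul_const hq0
  have hA : Tendsto (fun n : ℕ =>
      Real.Gamma ((n:ℝ)*p+1) / Real.exp (phiSt ((n:ℝ)*p))) atTop (𝓝 1) :=
    tendsto_Gamma_ratio.comp hnp
  have hB : Tendsto (fun n : ℕ =>
      Real.Gamma ((n:ℝ)*(1-p)+1) / Real.exp (phiSt ((n:ℝ)*(1-p)))) atTop (𝓝 1) :=
    tendsto_Gamma_ratio.comp hnq
  have hF : Tendsto (fun n : ℕ => (n.factorial:ℝ) / Real.exp (phiSt n)) atTop (𝓝 1) := by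
    have h := (Real.continuous_exp.tendsto 0).comp tendsto_tSt
    rw [Real.exp_zero] at h
    apply h.congr'
    filter_upwards [eventually_ge_atTop 1] with n hn
    have hf : (0:ℝ) < n.factorial := by positivity
    simp only [Function.comp_apply, tSt]
    rw [Real.exp_sub, Real.exp_log hf]
  have hlim : Tendsto (fun n : ℕ =>
      ((n.factorial:ℝ) / Real.exp (phiSt n)) /
        ((Real.Gamma ((n:ℝ)*p+1) / Real.exp (phiSt ((n:ℝ)*p))) *
         (Real.Gamma ((n:ℝ)*(1-p)+1) / Real.exp (phiSt ((n:ℝ)*(1-p)))))) atTop (𝓝 1) := by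
    have := hF.div (hA.mul hB) (by norm_num)
    rw [mul_one, div_one] at this; exact this
  apply hlim.congr'
  filter_upwards [eventually_ge_atTop 1] with n hn
  have hn0 : (0:ℝ) < n := by exact_mod_cast hn
  have ha0 : (0:ℝ) < (n:ℝ)*p := by positivity
  have hb0 : (0:ℝ) < (n:ℝ)*(1-p) := by positivity
  have hGA : 0 < Real.Gamma ((n:ℝ)*p+1) := Real.Gamma_pos_of_pos (by linarith)
  have hGB : 0 < Real.Gamma ((n:ℝ)*(1-p)+1) := Real.Gamma_pos_of_pos (by linarith)
  -- rewrite Pn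
  have hsub : (n:ℝ) - (n:ℝ)*p = (n:ℝ)*(1-p) := by ring
  have hPn : Pn n p = (n.factorial:ℝ) / (Real.Gamma ((n:ℝ)*p+1) * Real.Gamma ((n:ℝ)*(1-p)+1))
      * Real.exp (((n:ℝ)*p) * Real.log p) * Real.exp (((n:ℝ)*(1-p)) * Real.log (1-p)) := by
    unfold Pn gbinom
    rw [hsub, Real.rpow_def_of_pos hp0, Real.rpow_def_of_pos hq0,
      mul_comm (Real.log p) ((n:ℝ)*p), mul_comm (Real.log (1-p)) ((n:ℝ)*(1-p))]
  have hsq : Real.sqrt (2*π*p*(1-p)*n) = Real.exp (Real.log (2*π*p*(1-p)*(n:ℝ)) / 2) := by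
    rw [← Real.log_sqrt (by positivity), Real.exp_log (by positivity)]
  -- key exponent identity
  have hkey : Real.exp (phiSt ((n:ℝ)*p)) * Real.exp (phiSt ((n:ℝ)*(1-p)))
      = Real.exp (((n:ℝ)*p) * Real.log p) * Real.exp (((n:ℝ)*(1-p)) * Real.log (1-p))
        * Real.exp (Real.log (2*π*p*(1-p)*(n:ℝ)) / 2) * Real.exp (phiSt n) := by
    rw [← Real.exp_add, ← Real.exp_add, ← Real.exp_add, ← Real.exp_add]
    congr 1
    unfold phiSt
    rw [Real.log_mul (by positivity) hp0.ne', Real.log_mul (by positivity) hq0.ne',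
      Real.log_mul (mul_ne_zero two_ne_zero Real.pi_ne_zero) ha0.ne',
      Real.log_mul (mul_ne_zero two_ne_zero Real.pi_ne_zero) hb0.ne',
      Real.log_mul (mul_ne_zero two_ne_zero Real.pi_ne_zero) hn0.ne',
      Real.log_mul (by positivity) hn0.ne',
      Real.log_mul (mul_ne_zero (mul_ne_zero two_ne_zero Real.pi_ne_zero) hp0.ne') hq0.ne',
      Real.log_mul (mul_ne_zero two_ne_zero Real.pi_ne_zero) hp0.ne',
      Real.log_mul hn0.ne' hp0.ne', Real.log_mul hn0.ne' hq0.ne']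
    ring
  rw [hPn, hsq]
  have hexpn : Real.exp (phiSt n) ≠ 0 := Real.exp_ne_zero _
  have hexpa : Real.exp (phiSt ((n:ℝ)*p)) ≠ 0 := Real.exp_ne_zero _
  have hexpb : Real.exp (phiSt ((n:ℝ)*(1-p))) ≠ 0 := Real.exp_ne_zero _
  field_simp
  rw [hkey]
  ring
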